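/- For every real number t and positive integer a, ({t/a} − {t/a}²) − 4({t/(2a)} − {t/(2a)}²) = −2‖t/(2a)‖, where {x} denotes the fractional part of x and ‖x‖ denotes the distance from x to the nearest integer. -/

import Mathlib

/- Fractional-part identity: `({t/a} - {t/a}²) - 4({t/(2a)} - {t/(2a)}²) = -2‖t/(2a)‖`,
where `‖x‖ = min({x}, 1 - {x})` is the distance to the nearest integer. -/
theorem fract_identity_dist_nearest_int (t : ℝ) (a : ℕ) (ha : 0 < a) :
    (Int.fract (t / a) - (Int.fract (t / a)) ^ 2) -
      4 * (Int.fract (t / (2 * a)) - (Int.fract (t / (2 * a))) ^ 2) =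
    -2 * min (Int.fract (t / (2 * a))) (1 - Int.fract (t / (2 * a))) := by
  set y := t / (2 * a) with hy
  set u := Int.fract y with hu
  have ha' : (a : ℝ) ≠ 0 := Nat.cast_ne_zero.mpr ha.ne'
  have hxy : t / a = 2 * y := by
    rw [hy]; field_simp
  have h2y : (2 : ℝ) * y = 2 * u + 2 * (⌊y⌋ : ℝ) := by
    have := Int.fract_add_floor y
    rw [hu]; linarith
  have hfx : Int.fract (t / a) = Int.fract (2 * u) := by
    rw [hxy, h2y]
    have : (2 : ℝ) * (⌊y⌋ : ℝ) = ((2 * ⌊y⌋ : ℤ) : ℝ) := by push_cast; ring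
    rw [this, Int.fract_add_intCast]
  have hu0 : 0 ≤ u := Int.fract_nonneg y
  have hu1 : u < 1 := Int.fract_lt_one y
  rcases lt_or_ge u (1/2) with h | h
  · have hf2 : Int.fract (2 * u) = 2 * u := Int.fract_eq_self.mpr ⟨by linarith, by linarith⟩
    have hmin : min u (1 - u) = u := min_eq_left (by linarith)
    rw [hfx, hf2, hmin]; ring
  · have hf2 : Int.fract (2 * u) = 2 * u - 1 := by
      have : Int.fract (2 * u) = Int.fract (2 * u - 1) := by
        rw [show (2:ℝ) * u - 1 = 2 * u + (-1 : ℤ) by push_cast; ring, Int.fract_add_intCast]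
      rw [this, Int.fract_eq_self.mpr ⟨by linarith, by linarith⟩]
    have hmin : min u (1 - u) = 1 - u := min_eq_right (by linarith)
    rw [hfx, hf2, hmin]; ring
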